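/- Suppose F is L-smooth with minimum F* and the iterates θ_{g+1} = θ_g − η r_g satisfy E[‖r_g − ∇F(θ_g)‖²] ≤ σ² and E[r_g] = ∇F(θ_g) + e_g with ‖e_g‖² ≤ σ². Then with step size η = 1/(L√G) and G ≥ 4, the average squared gradient norm satisfies (1/G)Σ_{g=0}^{G−1} E[‖∇F(θ_g)‖²] ≤ 4L(F(θ₀) − F*)/√G + 4(½ + 1/√G)σ². -/

import Mathlib

open MeasureTheory Finset

lemma descent_aux {E : Type*} [NormedAddCommGroup E] [InnerProductSpace ℝ E]
    [CompleteSpace E] (F : E → ℝ) (F' : E → E) (L : ℝ)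
    (hgrad : ∀ x, HasGradientAt F (F' x) x)
    (hLip : ∀ x y, ‖F' x - F' y‖ ≤ L * ‖x - y‖) (x y : E) :
    F y ≤ F x + inner ℝ (F' x) (y - x) + L / 2 * ‖y - x‖ ^ 2 := by
  set v := y - x with hv
  set g : ℝ → ℝ := fun t => F (x + t • v) - t * inner ℝ (F' x) v - L / 2 * t ^ 2 * ‖v‖ ^ 2
    with hg
  have hderiv : ∀ t : ℝ, HasDerivAt g
      ((inner ℝ (F' (x + t • v)) v : ℝ) - inner ℝ (F' x) v - L * t * ‖v‖ ^ 2) t := by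
    intro t
    have h1 : HasDerivAt (fun t : ℝ => x + t • v) v t := by
      simpa using ((hasDerivAt_id t).smul_const v).const_add x
    have h2 : HasDerivAt (fun t : ℝ => F (x + t • v))
        ((inner ℝ (F' (x + t • v)) v : ℝ)) t := by
      have := ((hgrad (x + t • v)).hasFDerivAt.comp_hasDerivAt t h1)
      simp only [InnerProductSpace.toDual_apply_apply] at this
      exact this
    have h3 : HasDerivAt (fun t : ℝ => t * (inner ℝ (F' x) v : ℝ)) (inner ℝ (F' x) v : ℝ) t := by
      simpa using (hasDerivAt_id t).mul_const (inner ℝ (F' x) v : ℝ)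
    have h4 : HasDerivAt (fun t : ℝ => L / 2 * t ^ 2 * ‖v‖ ^ 2) (L * t * ‖v‖ ^ 2) t := by
      have hp : HasDerivAt (fun t : ℝ => t ^ 2) (2 * t) t := by
        simpa using hasDerivAt_pow 2 t
      have h := (hp.const_mul (L / 2)).mul_const (‖v‖ ^ 2)
      have he : L * t * ‖v‖ ^ 2 = L / 2 * (2 * t) * ‖v‖ ^ 2 := by ring
      rw [he]; exact h
    exact (h2.sub h3).sub h4
  have hanti : AntitoneOn g (Set.Icc 0 1) := by
    apply antitoneOn_of_deriv_nonpos (convex_Icc 0 1)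
    · exact fun t _ => (hderiv t).continuousAt.continuousWithinAt
    · intro t ht
      exact (hderiv t).differentiableAt.differentiableWithinAt
    · intro t ht
      rw [(hderiv t).deriv]
      rw [interior_Icc, Set.mem_Ioo] at ht
      have hinn : (inner ℝ (F' (x + t • v)) v : ℝ) - inner ℝ (F' x) v ≤ L * t * ‖v‖ ^ 2 := by
        have h5 : (inner ℝ (F' (x + t • v)) v : ℝ) - inner ℝ (F' x) v
            = inner ℝ (F' (x + t • v) - F' x) v := by rw [inner_sub_left]
        rw [h5]
        calc (inner ℝ (F' (x + t • v) - F' x) v : ℝ) ≤ ‖F' (x + t • v) - F' x‖ * ‖v‖ :=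
              real_inner_le_norm _ _
          _ ≤ L * ‖x + t • v - x‖ * ‖v‖ := by
              apply mul_le_mul_of_nonneg_right (hLip _ _) (norm_nonneg _)
          _ = L * t * ‖v‖ ^ 2 := by
              rw [add_sub_cancel_left, norm_smul, Real.norm_eq_abs,
                abs_of_pos ht.1]; ring
      linarith
  have h01 := hanti (Set.mem_Icc.2 ⟨le_refl 0, zero_le_one⟩)
    (Set.mem_Icc.2 ⟨zero_le_one, le_refl 1⟩) zero_le_one
  simp only [hg, one_smul, zero_smul, add_zero, zero_mul, one_mul, one_pow] at h01
  have hxy : x + v = y := by rw [hv]; abel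
  rw [hxy] at h01
  simp at h01
  linarith

lemma step_aux {E : Type*} [NormedAddCommGroup E] [InnerProductSpace ℝ E]
    [CompleteSpace E] (F : E → ℝ) (F' : E → E) (L η : ℝ)
    (hL : 0 < L) (hη0 : 0 < η) (hLη : L * η ≤ 1 / 2)
    (hgrad : ∀ x, HasGradientAt F (F' x) x)
    (hLip : ∀ x y, ‖F' x - F' y‖ ≤ L * ‖x - y‖) (x rr : E) :
    F (x - η • rr) ≤ F x - η / 2 * ‖F' x‖ ^ 2 + η / 2 * ‖rr - F' x‖ ^ 2 := by
  have hd := descent_aux F F' L hgrad hLip x (x - η • rr)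
  have h1 : x - η • rr - x = -(η • rr) := by abel
  rw [h1, inner_neg_right, real_inner_smul_right, norm_neg, norm_smul,
    Real.norm_eq_abs, abs_of_pos hη0, mul_pow] at hd
  set a := F' x with ha
  set δ := rr - a with hδ
  have hr : rr = a + δ := by rw [hδ]; abel
  have hip : (inner ℝ a rr : ℝ) = ‖a‖ ^ 2 + inner ℝ a δ := by
    rw [hr, inner_add_right, real_inner_self_eq_norm_sq]
  have hnr : ‖rr‖ ^ 2 = ‖a‖ ^ 2 + 2 * inner ℝ a δ + ‖δ‖ ^ 2 := by
    rw [hr]; exact norm_add_sq_real a δ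
  rw [hip, hnr] at hd
  have habs := abs_real_inner_le_norm a δ
  have hI1 : -(inner ℝ a δ : ℝ) ≤ ‖a‖ * ‖δ‖ := by
    rw [abs_le] at habs; linarith [habs.1]
  have hc : 0 ≤ η - L * η ^ 2 := by nlinarith
  have k1 : 0 ≤ (η - L * η ^ 2) * (‖a‖ * ‖δ‖ + inner ℝ a δ) :=
    mul_nonneg hc (by linarith)
  have k2 : 0 ≤ (η - L * η ^ 2) * ((‖a‖ ^ 2 + ‖δ‖ ^ 2) / 2 - ‖a‖ * ‖δ‖) :=
    mul_nonneg hc (by nlinarith [sq_nonneg (‖a‖ - ‖δ‖)])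
  nlinarith [hd, k1, k2]

theorem elsa_convergence {E : Type*} [NormedAddCommGroup E] [InnerProductSpace ℝ E]
    [CompleteSpace E] {Ω : Type*} [MeasureSpace Ω]
    [IsProbabilityMeasure (volume : Measure Ω)]
    (F : E → ℝ) (F' : E → E) (L Fstar σ : ℝ) (G : ℕ) (η : ℝ)
    (θ : ℕ → Ω → E) (r : ℕ → Ω → E) (θ₀ : E)
    (hL : 0 < L) (hG : 4 ≤ G)
    (hη : η = 1 / (L * Real.sqrt G))
    (hgrad : ∀ x, HasGradientAt F (F' x) x)
    (hLip : ∀ x y, ‖F' x - F' y‖ ≤ L * ‖x - y‖)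
    (hmin : ∀ x, Fstar ≤ F x)
    (hinit : ∀ ω, θ 0 ω = θ₀)
    (hupdate : ∀ g ω, θ (g + 1) ω = θ g ω - η • r g ω)
    (hint₁ : ∀ g, Integrable (fun ω => ‖r g ω - F' (θ g ω)‖ ^ 2))
    (hint₂ : ∀ g, Integrable (fun ω => r g ω - F' (θ g ω)))
    (hint₃ : ∀ g, Integrable (fun ω => F (θ g ω)))
    (hint₄ : ∀ g, Integrable (fun ω => ‖F' (θ g ω)‖ ^ 2))
    (hvar : ∀ g, ∫ ω, ‖r g ω - F' (θ g ω)‖ ^ 2 ≤ σ ^ 2)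
    (hbias : ∀ g, ‖∫ ω, (r g ω - F' (θ g ω))‖ ^ 2 ≤ σ ^ 2) :
    (1 / (G : ℝ)) * ∑ g ∈ range G, ∫ ω, ‖F' (θ g ω)‖ ^ 2 ≤
      4 * L * (F θ₀ - Fstar) / Real.sqrt G +
        4 * (1 / 2 + 1 / Real.sqrt G) * σ ^ 2 := by
  set s := Real.sqrt G with hs
  have hG4 : (4 : ℝ) ≤ (G : ℝ) := by exact_mod_cast hG
  have hs2 : 2 ≤ s := by
    rw [hs, show (2 : ℝ) = Real.sqrt 4 by
      rw [show (4 : ℝ) = 2 ^ 2 by norm_num, Real.sqrt_sq (by norm_num)]]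
    exact Real.sqrt_le_sqrt hG4
  have hs0 : 0 < s := by linarith
  have hGs : (G : ℝ) = s ^ 2 := by
    rw [hs, Real.sq_sqrt (by positivity)]
  have hη0 : 0 < η := by rw [hη]; positivity
  have hLη : L * η ≤ 1 / 2 := by
    rw [hη]
    rw [show L * (1 / (L * s)) = 1 / s by field_simp]
    rw [div_le_div_iff₀ hs0 (by norm_num)]
    linarith
  have hσ2 : 0 ≤ σ ^ 2 := sq_nonneg σ
  -- per-step inequality in expectation
  have hstep : ∀ g, η / 2 * ∫ ω, ‖F' (θ g ω)‖ ^ 2 ≤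
      (∫ ω, F (θ g ω)) - (∫ ω, F (θ (g + 1) ω)) + η / 2 * σ ^ 2 := by
    intro g
    have hpw : ∀ ω, F (θ (g + 1) ω) ≤
        F (θ g ω) - η / 2 * ‖F' (θ g ω)‖ ^ 2 + η / 2 * ‖r g ω - F' (θ g ω)‖ ^ 2 := by
      intro ω
      rw [hupdate g ω]
      exact step_aux F F' L η hL hη0 hLη hgrad hLip _ _
    have hf1 : Integrable (fun ω => F (θ g ω) - η / 2 * ‖F' (θ g ω)‖ ^ 2) :=
      (hint₃ g).sub ((hint₄ g).const_mul (η / 2))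
    have hf2 : Integrable (fun ω => η / 2 * ‖r g ω - F' (θ g ω)‖ ^ 2) :=
      (hint₁ g).const_mul (η / 2)
    have hintR : Integrable (fun ω => F (θ g ω) - η / 2 * ‖F' (θ g ω)‖ ^ 2
        + η / 2 * ‖r g ω - F' (θ g ω)‖ ^ 2) := hf1.add hf2
    have hI : (∫ ω, F (θ (g + 1) ω)) ≤ ∫ ω, (F (θ g ω) - η / 2 * ‖F' (θ g ω)‖ ^ 2
        + η / 2 * ‖r g ω - F' (θ g ω)‖ ^ 2) :=
      integral_mono (hint₃ (g + 1)) hintR hpw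
    rw [integral_add hf1 hf2,
      integral_sub (hint₃ g) ((hint₄ g).const_mul (η / 2)),
      integral_const_mul, integral_const_mul] at hI
    have hv : η / 2 * ∫ ω, ‖r g ω - F' (θ g ω)‖ ^ 2 ≤ η / 2 * σ ^ 2 :=
      mul_le_mul_of_nonneg_left (hvar g) (by positivity)
    linarith
  have hLne : L ≠ 0 := ne_of_gt hL
  have hsne : s ≠ 0 := ne_of_gt hs0
  -- sum over g
  have hsum : η / 2 * (∑ g ∈ range G, ∫ ω, ‖F' (θ g ω)‖ ^ 2) ≤ (F θ₀ - Fstar) + (G : ℝ) * (η / 2 * σ ^ 2) := by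
    have h1 : ∑ g ∈ range G, (η / 2 * ∫ ω, ‖F' (θ g ω)‖ ^ 2) ≤
        ∑ g ∈ range G, ((∫ ω, F (θ g ω)) - (∫ ω, F (θ (g + 1) ω)) + η / 2 * σ ^ 2) :=
      Finset.sum_le_sum fun g _ => hstep g
    rw [← Finset.mul_sum] at h1
    rw [Finset.sum_add_distrib, Finset.sum_const, Finset.sum_range_sub'
      (fun g => ∫ ω, F (θ g ω)), nsmul_eq_mul, Finset.card_range] at h1
    have h0 : (∫ ω, F (θ 0 ω)) = F θ₀ := by
      have : (fun ω => F (θ 0 ω)) = fun _ => F θ₀ := by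
        funext ω; rw [hinit ω]
      rw [this, integral_const, probReal_univ]
      simp
    have hG' : Fstar ≤ ∫ ω, F (θ G ω) := by
      have := integral_mono (integrable_const Fstar) (hint₃ G) (fun ω => hmin (θ G ω))
      rwa [integral_const, probReal_univ, one_smul] at this
    rw [h0] at h1
    linarith
  set S := ∑ g ∈ range G, ∫ ω, ‖F' (θ g ω)‖ ^ 2 with hS
  -- convert hsum to a bound on S
  have hSle : S ≤ 2 * L * s * (F θ₀ - Fstar) + s ^ 2 * σ ^ 2 := by
    have h2 := mul_le_mul_of_nonneg_right hsum (show (0:ℝ) ≤ 2 * L * s by positivity)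
    have hkey : η * (L * s) = 1 := by
      rw [hη, one_div, inv_mul_cancel₀ (by positivity)]
    calc S = η / 2 * S * (2 * L * s) := by linear_combination (-S) * hkey
      _ ≤ (F θ₀ - Fstar + (G : ℝ) * (η / 2 * σ ^ 2)) * (2 * L * s) := h2
      _ = 2 * L * s * (F θ₀ - Fstar) + s ^ 2 * σ ^ 2 := by
          rw [hGs]; linear_combination (s ^ 2 * σ ^ 2) * hkey
  have hD : 0 ≤ F θ₀ - Fstar := by linarith [hmin θ₀]
  calc (1 / (G : ℝ)) * S ≤ (1 / (G : ℝ)) * (2 * L * s * (F θ₀ - Fstar) + s ^ 2 * σ ^ 2) :=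
        mul_le_mul_of_nonneg_left hSle (by positivity)
    _ = 2 * L * (F θ₀ - Fstar) / s + σ ^ 2 := by
        rw [hGs]; field_simp
    _ ≤ 4 * L * (F θ₀ - Fstar) / s + 4 * (1 / 2 + 1 / s) * σ ^ 2 := by
        have t1 : 0 ≤ L * (F θ₀ - Fstar) / s := by positivity
        have t2 : 0 ≤ σ ^ 2 / s := by positivity
        have e1 : 4 * L * (F θ₀ - Fstar) / s = 2 * L * (F θ₀ - Fstar) / s
            + 2 * (L * (F θ₀ - Fstar) / s) := by ring
        have e2 : 4 * (1 / 2 + 1 / s) * σ ^ 2 = 2 * σ ^ 2 + 4 * (σ ^ 2 / s) := by ring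
        linarith
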